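/- Fix U ⊆ I with U ≠ I and an element i_v ∈ I with i_v ≤ min U. Then Σ_{I_l} (-1)^{|I_l| + |U|} q^{C(I_l) + L*(U | I_l)} = (-1)^{χ(min U ≠ i_v)} q^{C(U ∪ {i_v}) + L*(U | U ∪ {i_v})} · ∏_{i_{t_s} ∈ I \ U \ {i_1,...,i_v}} (1 - q^{g(i_{t_s})}), where the sum is over all subsets I_l with U ⊆ I_l ⊆ I and min I_l = i_v, and g(i_{t_s}) = -Σ_{k=v}^{s-1} χ(i_{t_k} > j_{t_s} > i_v) a_{i_{t_k}} + Σ_{k=s+1}^{m-|U|} (1 - χ(i_{t_k} > j_{t_s} > i_v)) a_{i_{t_k}} with I \ U = {i_{t_1},...,i_{t_{m-|U|}}}, t_1 < ⋯ < t_{m-|U|}. -/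

import Mathlib

open Finsupp
noncomputable section
variable {n m : ℕ}

/-- `min {i_l : l ∈ S}` (with junk value `0` for `S = ∅`). -/
def imin (i : Fin m → Fin (n+1)) (S : Finset (Fin m)) : Fin (n+1) := S.inf i
/-- `t`: the number of paired `j`'s lying below `min {i_l : l ∈ S}`. -/
def tS (i j : Fin m → Fin (n+1)) (S : Finset (Fin m)) : ℕ :=
  (S.filter fun l => j l < imin i S).card
/-- `N(k, I_S)` -/
def NI (i : Fin m → Fin (n+1)) (S : Finset (Fin m)) (k : Fin (n+1)) : ℕ :=
  (S.filter fun l => i l ≤ k).card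
/-- `N(k, J⁺_S)` -/
def NJp (i j : Fin m → Fin (n+1)) (S : Finset (Fin m)) (k : Fin (n+1)) : ℕ :=
  (S.filter fun l => imin i S < j l ∧ j l ≤ k).card
/-- `N(k, J⁻_S)` -/
def NJm (i j : Fin m → Fin (n+1)) (S : Finset (Fin m)) (k : Fin (n+1)) : ℕ :=
  (S.filter fun l => j l < imin i S ∧ j l ≤ k).card
/-- `w_k`: equals `a_k` for `k ∉ T`, `0` for `k ∈ T` (as subsets of `{0,…,n}`). -/
def wgt (i : Fin m → Fin (n+1)) (a : Fin (n+1) → ℕ) (T : Finset (Fin m))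
    (k : Fin (n+1)) : ℤ :=
  if k ∈ T.image i then 0 else (a k : ℤ)
/-- `L*(T | I_S)` of the extended first-layer formula (eq. (6)),
for the pair `(I_S, J_S)` indexed by `S` and a subset `T ⊆ S`. -/
def Lstar (i j : Fin m → Fin (n+1)) (a : Fin (n+1) → ℕ)
    (S T : Finset (Fin m)) : ℤ :=
  (tS i j S : ℤ)
  + ∑ k ∈ Finset.univ.filter (fun k => imin i S ≤ k),
      ((NI i S k : ℤ) - (NJp i j S k : ℤ)) * wgt i a T k
  + ∑ k ∈ Finset.univ.filter (fun k => k < imin i S),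
      ((tS i j S : ℤ) - (NJm i j S k : ℤ)) * (a k : ℤ)
/-- `min 𝕀_k` for the chain (11): `𝕀` corresponding to `r ∈ Sᶜ` is
`I_S ∪ {i_{r'} : r' ∈ Sᶜ, r' ≥ r}`. -/
def mink (i : Fin m → Fin (n+1)) (S : Finset (Fin m)) (r : Fin m) : Fin (n+1) :=
  imin i (S ∪ Sᶜ.filter fun r' => r ≤ r')
/-- `C(I_S)` of equation (12). -/
def Cfun (i j : Fin m → Fin (n+1)) (a : Fin (n+1) → ℕ) (S : Finset (Fin m)) : ℤ :=
  1 + (∑ k, (a k : ℤ)) - (∑ l ∈ S, (a (i l) : ℤ))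
  + ∑ r ∈ Sᶜ, ((NI i S (i r) : ℤ) -
      (((insert r S).filter fun l => mink i S r < j l ∧ j l ≤ i r).card : ℤ))
      * (a (i r) : ℤ)
  - Lstar i j a S S
/-- `g(i_{t_s})` of Lemma 4.1, indexed by the element `p = t_s` of the
complement of `U`; `v` is the index of `i_v = min I_l`. -/
def gfun (i j : Fin m → Fin (n+1)) (a : Fin (n+1) → ℕ) (U : Finset (Fin m))
    (v p : Fin m) : ℤ :=
  - (∑ p' ∈ Uᶜ.filter fun p' => v ≤ p' ∧ p' < p,
      if i v < j p ∧ j p < i p' then (a (i p') : ℤ) else 0)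
  + ∑ p' ∈ Uᶜ.filter fun p' => p < p',
      (1 - if i v < j p ∧ j p < i p' then 1 else 0) * (a (i p') : ℤ)

def qq : RatFunc ℚ := RatFunc.X


section Aux
variable {i j : Fin m → Fin (n+1)} {a : Fin (n+1) → ℕ}

lemma qq_ne_zero : qq ≠ 0 := RatFunc.X_ne_zero

lemma qq_zpow_sum {α : Type*} [DecidableEq α] (T : Finset α) (g : α → ℤ) :
    qq ^ (∑ p ∈ T, g p) = ∏ p ∈ T, qq ^ g p := by
  induction T using Finset.induction_on with
  | empty => simp
  | @insert q T hq ih => rw [Finset.sum_insert hq, Finset.prod_insert hq, zpow_add₀ qq_ne_zero, ih]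

lemma prod_one_sub {α : Type*} [DecidableEq α] (P : Finset α) (f : α → RatFunc ℚ) :
    ∏ p ∈ P, (1 - f p) = ∑ T ∈ P.powerset, (-1 : RatFunc ℚ) ^ T.card * ∏ p ∈ T, f p := by
  induction P using Finset.induction_on with
  | empty => simp
  | @insert q P hq ih =>
    have hdisj : Disjoint P.powerset (P.powerset.image (insert q)) := by
      rw [Finset.disjoint_left]
      intro T hT hT2
      obtain ⟨T', hT', rfl⟩ := Finset.mem_image.1 hT2
      exact hq (Finset.mem_powerset.1 hT (Finset.mem_insert_self q T'))
    have hinj : ∀ T ∈ P.powerset, ∀ T' ∈ P.powerset, insert q T = insert q T' → T = T' := by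
      intro T hT T' hT' h
      have hqT : q ∉ T := fun hh => hq (Finset.mem_powerset.1 hT hh)
      have hqT' : q ∉ T' := fun hh => hq (Finset.mem_powerset.1 hT' hh)
      rw [← Finset.erase_insert hqT, ← Finset.erase_insert hqT', h]
    rw [Finset.prod_insert hq, ih, Finset.powerset_insert, Finset.sum_union hdisj,
        Finset.sum_image hinj, Finset.mul_sum, ← Finset.sum_add_distrib]
    refine Finset.sum_congr rfl fun T hT => ?_
    have hqT : q ∉ T := fun hh => hq (Finset.mem_powerset.1 hT hh)
    rw [Finset.card_insert_of_notMem hqT, Finset.prod_insert hqT, pow_succ]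
    ring

lemma imin_eq (hi : StrictMono i) {S : Finset (Fin m)} {v : Fin m}
    (hvS : v ∈ S) (hS : ∀ l ∈ S, v ≤ l) : imin i S = i v :=
  le_antisymm (Finset.inf_le hvS) (Finset.le_inf fun l hl => hi.monotone (hS l hl))

lemma mink_eq (hi : StrictMono i) {S : Finset (Fin m)} {v : Fin m}
    (hvS : v ∈ S) (hS : ∀ l ∈ S, v ≤ l) {r : Fin m} (hr : r ∉ S) :
    mink i S r = i (min v r) := by
  unfold mink imin
  apply le_antisymm
  · apply Finset.inf_le
    rcases le_total v r with h | h
    · rw [min_eq_left h]; exact Finset.mem_union_left _ hvS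
    · rw [min_eq_right h]
      exact Finset.mem_union_right _
        (Finset.mem_filter.2 ⟨Finset.mem_compl.2 hr, le_refl r⟩)
  · apply Finset.le_inf
    intro l hl
    rcases Finset.mem_union.1 hl with h | h
    · exact hi.monotone (le_trans (min_le_left _ _) (hS l h))
    · exact hi.monotone (le_trans (min_le_right _ _) (Finset.mem_filter.1 h).2)

lemma card_filter_insert {α : Type*} [DecidableEq α] (S : Finset α) (p : α) (hp : p ∉ S)
    (P : α → Prop) [DecidablePred P] :
    ((((insert p S).filter P).card : ℤ))
      = ((S.filter P).card : ℤ) + (if P p then 1 else 0) := by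
  rw [Finset.filter_insert]
  split_ifs with h
  · rw [Finset.card_insert_of_notMem (fun hmem => hp (Finset.mem_filter.1 hmem).1)]
    push_cast; ring
  · simp

end Aux


section Step
variable {i j : Fin m → Fin (n+1)} {a : Fin (n+1) → ℕ}

lemma Lstar_insert (hi : StrictMono i) {v : Fin m} {S : Finset (Fin m)}
    (hvS : v ∈ S) (hS : ∀ l ∈ S, v ≤ l) {p : Fin m} (hp : p ∉ S) (hvp : v < p)
    (j : Fin m → Fin (n+1)) (a : Fin (n+1) → ℕ) (T : Finset (Fin m)) :
    Lstar i j a (insert p S) T = Lstar i j a S T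
      + (if j p < i v then 1 else 0)
      + ∑ k ∈ Finset.univ.filter (fun k => i v ≤ k),
          ((if i p ≤ k then 1 else 0) - (if i v < j p ∧ j p ≤ k then 1 else 0))
            * wgt i a T k
      + ∑ k ∈ Finset.univ.filter (fun k => k < i v),
          ((if j p < i v then 1 else 0) - (if j p < i v ∧ j p ≤ k then 1 else 0))
            * (a k : ℤ) := by
  have hS' : ∀ l ∈ insert p S, v ≤ l := by
    intro l hl
    rcases Finset.mem_insert.1 hl with rfl | hl
    · exact hvp.le
    · exact hS l hl
  have hm1 : imin i S = i v := imin_eq hi hvS hS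
  have hm2 : imin i (insert p S) = i v := imin_eq hi (Finset.mem_insert_of_mem hvS) hS'
  unfold Lstar tS NI NJp NJm
  simp only [hm1, hm2, card_filter_insert S p hp]
  have h1 : ∀ k ∈ Finset.univ.filter (fun k : Fin (n+1) => i v ≤ k),
      (((S.filter fun l => i l ≤ k).card : ℤ) + (if i p ≤ k then 1 else 0)
        - (((S.filter fun l => i v < j l ∧ j l ≤ k).card : ℤ)
            + (if i v < j p ∧ j p ≤ k then 1 else 0))) * wgt i a T k
      = (((S.filter fun l => i l ≤ k).card : ℤ)
          - ((S.filter fun l => i v < j l ∧ j l ≤ k).card : ℤ)) * wgt i a T k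
        + ((if i p ≤ k then 1 else 0) - (if i v < j p ∧ j p ≤ k then 1 else 0))
            * wgt i a T k := by
    intro k _; ring
  have h2 : ∀ k ∈ Finset.univ.filter (fun k : Fin (n+1) => k < i v),
      (((S.filter fun l => j l < i v).card : ℤ) + (if j p < i v then 1 else 0)
        - (((S.filter fun l => j l < i v ∧ j l ≤ k).card : ℤ)
            + (if j p < i v ∧ j p ≤ k then 1 else 0))) * (a k : ℤ)
      = (((S.filter fun l => j l < i v).card : ℤ)
          - ((S.filter fun l => j l < i v ∧ j l ≤ k).card : ℤ)) * (a k : ℤ)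
        + ((if j p < i v then 1 else 0) - (if j p < i v ∧ j p ≤ k then 1 else 0))
            * (a k : ℤ) := by
    intro k _; ring
  rw [Finset.sum_congr rfl h1, Finset.sum_congr rfl h2,
      Finset.sum_add_distrib, Finset.sum_add_distrib]
  ring

lemma sum_wgt_insert (hi : StrictMono i) {S : Finset (Fin m)} {p : Fin m} (hp : p ∉ S)
    (a : Fin (n+1) → ℕ) (f : Fin (n+1) → ℤ) (A : Finset (Fin (n+1))) (hmem : i p ∈ A) :
    ∑ k ∈ A, f k * wgt i a (insert p S) k
      = ∑ k ∈ A, f k * wgt i a S k - f (i p) * (a (i p) : ℤ) := by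
  have hip_not : i p ∉ S.image i := by
    simp only [Finset.mem_image, not_exists, not_and]
    intro l hl h
    exact hp (hi.injective h ▸ hl)
  have hw : ∀ k, wgt i a (insert p S) k = if k = i p then 0 else wgt i a S k := by
    intro k
    unfold wgt
    rw [Finset.image_insert]
    by_cases h : k = i p
    · simp [h]
    · simp [Finset.mem_insert, h]
  have hwp : wgt i a S (i p) = (a (i p) : ℤ) := by
    unfold wgt; simp [hip_not]
  have h0 : ∀ k ∈ A.erase (i p),
      f k * wgt i a (insert p S) k = f k * wgt i a S k := by
    intro k hk
    rw [hw k, if_neg (Finset.ne_of_mem_erase hk)]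
  rw [← Finset.add_sum_erase A _ hmem,
      ← Finset.add_sum_erase A (fun k => f k * wgt i a S k) hmem,
      Finset.sum_congr rfl h0, hw, if_pos rfl, hwp]
  ring


lemma Bdiff (hi : StrictMono i) {v : Fin m} {S U : Finset (Fin m)} (hUS : U ⊆ S)
    (hS : ∀ l ∈ S, v ≤ l) (a : Fin (n+1) → ℕ) (f : Fin (n+1) → ℤ) :
    ∑ k ∈ Finset.univ.filter (fun k => i v ≤ k), f k * wgt i a U k
      - ∑ k ∈ Finset.univ.filter (fun k => i v ≤ k), f k * wgt i a S k
      = ∑ l ∈ S \ U, f (i l) * (a (i l) : ℤ) := by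
  classical
  have hwd : ∀ k, wgt i a U k - wgt i a S k
      = if k ∈ (S \ U).image i then (a k : ℤ) else 0 := by
    intro k
    unfold wgt
    by_cases hU' : k ∈ U.image i
    · have hSi : k ∈ S.image i := Finset.image_subset_image hUS hU'
      have hnot : k ∉ (S \ U).image i := by
        obtain ⟨u, hu, rfl⟩ := Finset.mem_image.1 hU'
        rintro hmem
        obtain ⟨l, hl, he⟩ := Finset.mem_image.1 hmem
        exact (Finset.mem_sdiff.1 hl).2 (hi.injective he ▸ hu)
      simp [hU', hSi, hnot]
    · by_cases hSi : k ∈ S.image i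
      · have hmem : k ∈ (S \ U).image i := by
          obtain ⟨l, hl, rfl⟩ := Finset.mem_image.1 hSi
          exact Finset.mem_image.2
            ⟨l, Finset.mem_sdiff.2 ⟨hl, fun h => hU' (Finset.mem_image.2 ⟨l, h, rfl⟩)⟩, rfl⟩
        simp [hU', hSi, hmem]
      · have hnot : k ∉ (S \ U).image i := fun hmem => by
          obtain ⟨l, hl, he⟩ := Finset.mem_image.1 hmem
          exact hSi (Finset.mem_image.2 ⟨l, (Finset.mem_sdiff.1 hl).1, he⟩)
        simp [hU', hSi, hnot]
  rw [← Finset.sum_sub_distrib]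
  have h1 : ∀ k ∈ Finset.univ.filter (fun k : Fin (n+1) => i v ≤ k),
      f k * wgt i a U k - f k * wgt i a S k
        = if k ∈ (S \ U).image i then f k * (a k : ℤ) else 0 := by
    intro k _
    rw [← mul_sub, hwd k, mul_ite, mul_zero]
  rw [Finset.sum_congr rfl h1, Finset.sum_ite_mem]
  have hsub : (S \ U).image i ⊆ Finset.univ.filter (fun k : Fin (n+1) => i v ≤ k) := by
    intro k hk
    obtain ⟨l, hl, rfl⟩ := Finset.mem_image.1 hk
    exact Finset.mem_filter.2
      ⟨Finset.mem_univ _, hi.monotone (hS l (Finset.mem_sdiff.1 hl).1)⟩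
  rw [Finset.inter_eq_right.2 hsub,
      Finset.sum_image (fun x _ y _ h => hi.injective h)]


lemma sum_eq_gfun (hi : StrictMono i) (hij : ∀ k l, i k ≠ j l) (a : Fin (n+1) → ℕ)
    {U S : Finset (Fin m)} {v p : Fin m} (hUS : U ⊆ S) (hvS : v ∈ S)
    (hS : ∀ l ∈ S, v ≤ l) (hp : p ∉ S) (hpU : p ∉ U) (hvp : v < p) :
    (∑ r ∈ Sᶜ.erase p, ((if p ≤ r then (1:ℤ) else 0)
        - (if i (min v r) < j p ∧ j p ≤ i r then 1 else 0)) * (a (i r) : ℤ))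
      + ∑ l ∈ S \ U, ((if i p ≤ i l then (1:ℤ) else 0)
          - (if i v < j p ∧ j p ≤ i l then 1 else 0)) * (a (i l) : ℤ)
      = gfun i j a U v p := by
  classical
  set h : Fin m → ℤ := fun r =>
    ((if p < r then (1:ℤ) else 0) - (if i v < j p ∧ j p < i r then 1 else 0))
      * (a (i r) : ℤ) with hh
  -- Step A : first sum
  have hA : (∑ r ∈ Sᶜ.erase p, ((if p ≤ r then (1:ℤ) else 0)
        - (if i (min v r) < j p ∧ j p ≤ i r then 1 else 0)) * (a (i r) : ℤ))
      = ∑ r ∈ (Sᶜ.erase p).filter (fun r => v ≤ r), h r := by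
    rw [← Finset.sum_subset (Finset.filter_subset (fun r => v ≤ r) (Sᶜ.erase p))
        (f := fun r => ((if p ≤ r then (1:ℤ) else 0)
          - (if i (min v r) < j p ∧ j p ≤ i r then 1 else 0)) * (a (i r) : ℤ)) ?_]
    · refine Finset.sum_congr rfl fun r hr => ?_
      obtain ⟨hr1, hvr⟩ := Finset.mem_filter.1 hr
      obtain ⟨hrp, _⟩ := Finset.mem_erase.1 hr1
      have e1 : (if p ≤ r then (1:ℤ) else 0) = if p < r then 1 else 0 := by
        by_cases hle : p ≤ r
        · rw [if_pos hle, if_pos (hle.lt_of_ne (Ne.symm hrp))]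
        · rw [if_neg hle, if_neg (fun h2 => hle h2.le)]
      have e2 : (if i (min v r) < j p ∧ j p ≤ i r then (1:ℤ) else 0)
          = if i v < j p ∧ j p < i r then 1 else 0 := by
        rw [min_eq_left hvr]
        by_cases hc : i v < j p ∧ j p ≤ i r
        · rw [if_pos hc, if_pos ⟨hc.1, hc.2.lt_of_ne (Ne.symm (hij r p))⟩]
        · rw [if_neg hc, if_neg (fun h2 => hc ⟨h2.1, h2.2.le⟩)]
      beta_reduce
      rw [e1, e2, hh]
    · intro r hr hr2
      have hrv : r < v := by
        by_contra hcon
        exact hr2 (Finset.mem_filter.2 ⟨hr, not_lt.1 hcon⟩)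
      have e1 : ¬ p ≤ r := not_le.2 (lt_trans hrv hvp)
      have e2 : ¬ (i (min v r) < j p ∧ j p ≤ i r) := by
        rw [min_eq_right hrv.le]
        rintro ⟨h1, h2⟩
        exact absurd (lt_of_lt_of_le h1 h2) (lt_irrefl _)
      beta_reduce
      rw [if_neg e1, if_neg e2]
      ring
  -- Step B : second sum
  have hB : (∑ l ∈ S \ U, ((if i p ≤ i l then (1:ℤ) else 0)
        - (if i v < j p ∧ j p ≤ i l then 1 else 0)) * (a (i l) : ℤ))
      = ∑ l ∈ S \ U, h l := by
    refine Finset.sum_congr rfl fun l hl => ?_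
    have hlS : l ∈ S := (Finset.mem_sdiff.1 hl).1
    have hlp : l ≠ p := fun h => hp (h ▸ hlS)
    have e1 : (if i p ≤ i l then (1:ℤ) else 0) = if p < l then 1 else 0 := by
      by_cases hle : p ≤ l
      · rw [if_pos (hi.monotone hle), if_pos (hle.lt_of_ne (Ne.symm hlp))]
      · rw [if_neg (fun h2 => hle (hi.le_iff_le.1 h2)), if_neg (fun h2 => hle h2.le)]
    have e2 : (if i v < j p ∧ j p ≤ i l then (1:ℤ) else 0)
        = if i v < j p ∧ j p < i l then 1 else 0 := by
      by_cases hc : i v < j p ∧ j p ≤ i l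
      · rw [if_pos hc, if_pos ⟨hc.1, hc.2.lt_of_ne (Ne.symm (hij l p))⟩]
      · rw [if_neg hc, if_neg (fun h2 => hc ⟨h2.1, h2.2.le⟩)]
    rw [e1, e2]
  rw [hA, hB]
  -- Step C : the union
  set W : Finset (Fin m) := Uᶜ.filter (fun r => v ≤ r ∧ r ≠ p) with hW
  have hdisj : Disjoint ((Sᶜ.erase p).filter (fun r => v ≤ r)) (S \ U) := by
    rw [Finset.disjoint_left]
    intro r hr hr2
    exact Finset.mem_compl.1 (Finset.mem_erase.1 (Finset.mem_filter.1 hr).1).2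
      (Finset.mem_sdiff.1 hr2).1
  have hset : ((Sᶜ.erase p).filter (fun r => v ≤ r)) ∪ (S \ U) = W := by
    ext r
    simp only [hW, Finset.mem_union, Finset.mem_filter, Finset.mem_erase,
      Finset.mem_compl, Finset.mem_sdiff]
    constructor
    · rintro (⟨⟨hrp, hrS⟩, hvr⟩ | ⟨hrS, hrU⟩)
      · exact ⟨fun h => hrS (hUS h), hvr, hrp⟩
      · exact ⟨hrU, hS r hrS, fun h => hp (h ▸ hrS)⟩
    · rintro ⟨hrU, hvr, hrp⟩
      by_cases hrS : r ∈ S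
      · exact Or.inr ⟨hrS, hrU⟩
      · exact Or.inl ⟨⟨hrp, hrS⟩, hvr⟩
  rw [← Finset.sum_union hdisj, hset]
  -- Step D : split W and match gfun
  rw [← Finset.sum_filter_add_sum_filter_not W (fun r => r < p)]
  have hW1 : W.filter (fun r => r < p) = Uᶜ.filter (fun p' => v ≤ p' ∧ p' < p) := by
    ext r
    simp only [hW, Finset.filter_filter, Finset.mem_filter, Finset.mem_compl]
    constructor
    · rintro ⟨hrU, ⟨hvr, _⟩, hlt⟩
      exact ⟨hrU, hvr, hlt⟩
    · rintro ⟨hrU, hvr, hlt⟩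
      exact ⟨hrU, ⟨hvr, ne_of_lt hlt⟩, hlt⟩
  have hW2 : W.filter (fun r => ¬ r < p) = Uᶜ.filter (fun p' => p < p') := by
    ext r
    simp only [hW, Finset.filter_filter, Finset.mem_filter, Finset.mem_compl]
    constructor
    · rintro ⟨hrU, ⟨hvr, hrp⟩, hnlt⟩
      exact ⟨hrU, (not_lt.1 hnlt).lt_of_ne (Ne.symm hrp)⟩
    · rintro ⟨hrU, hlt⟩
      exact ⟨hrU, ⟨le_trans hvp.le hlt.le, ne_of_gt hlt⟩, lt_asymm hlt⟩
  rw [hW1, hW2]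
  unfold gfun
  have hD1 : ∀ r ∈ Uᶜ.filter (fun p' => v ≤ p' ∧ p' < p),
      h r = -(if i v < j p ∧ j p < i r then (a (i r) : ℤ) else 0) := by
    intro r hr
    have hlt : r < p := (Finset.mem_filter.1 hr).2.2
    rw [hh]
    simp only []
    rw [if_neg (lt_asymm hlt)]
    split_ifs <;> ring
  have hD2 : ∀ r ∈ Uᶜ.filter (fun p' => p < p'),
      h r = (1 - if i v < j p ∧ j p < i r then (1:ℤ) else 0) * (a (i r) : ℤ) := by
    intro r hr
    have hlt : p < r := (Finset.mem_filter.1 hr).2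
    rw [hh]
    simp only []
    rw [if_pos hlt]
  rw [Finset.sum_congr rfl hD1, Finset.sum_congr rfl hD2, Finset.sum_neg_distrib]


lemma step (hi : StrictMono i) (hij : ∀ k l, i k ≠ j l) (a : Fin (n+1) → ℕ)
    {U : Finset (Fin m)} {v : Fin m} {S : Finset (Fin m)}
    (hvS : v ∈ S) (hS : ∀ l ∈ S, v ≤ l) (hUS : U ⊆ S)
    {p : Fin m} (hp : p ∉ S) (hpU : p ∉ U) (hvp : v < p) :
    Cfun i j a (insert p S) + Lstar i j a (insert p S) U
      = Cfun i j a S + Lstar i j a S U + gfun i j a U v p := by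
  classical
  have hS' : ∀ l ∈ insert p S, v ≤ l := by
    intro l hl
    rcases Finset.mem_insert.1 hl with rfl | hl
    · exact hvp.le
    · exact hS l hl
  have hvS' : v ∈ insert p S := Finset.mem_insert_of_mem hvS
  have hm1 : imin i S = i v := imin_eq hi hvS hS
  have hpc : p ∈ Sᶜ := Finset.mem_compl.2 hp
  have hcomp : (insert p S)ᶜ = Sᶜ.erase p := by
    ext r
    simp only [Finset.mem_compl, Finset.mem_insert, Finset.mem_erase, not_or]
  have hminkS : ∀ r ∉ S, mink i S r = i (min v r) := fun r hr => mink_eq hi hvS hS hr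
  have hminkS' : ∀ r ∉ insert p S, mink i (insert p S) r = i (min v r) :=
    fun r hr => mink_eq hi hvS' hS' hr
  -- Lstar deltas
  have hLU := Lstar_insert hi hvS hS hp hvp j a U
  have hLS' := Lstar_insert hi hvS hS hp hvp j a (insert p S)
  have hmemA : i p ∈ Finset.univ.filter (fun k => imin i S ≤ k) := by
    rw [hm1]
    exact Finset.mem_filter.2 ⟨Finset.mem_univ _, hi.monotone hvp.le⟩
  have hmemA' : i p ∈ Finset.univ.filter (fun k => i v ≤ k) :=
    Finset.mem_filter.2 ⟨Finset.mem_univ _, hi.monotone hvp.le⟩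
  have hLsw : Lstar i j a S (insert p S)
      = Lstar i j a S S
        - ((NI i S (i p) : ℤ) - (NJp i j S (i p) : ℤ)) * (a (i p) : ℤ) := by
    unfold Lstar
    rw [sum_wgt_insert hi hp a _ _ hmemA]
    ring
  have hBS' := sum_wgt_insert hi hp a
      (fun k => (if i p ≤ k then (1:ℤ) else 0) - (if i v < j p ∧ j p ≤ k then 1 else 0))
      (Finset.univ.filter (fun k => i v ≤ k)) hmemA'
  -- Cfun delta
  have hCd : Cfun i j a (insert p S) = Cfun i j a S - (a (i p) : ℤ)
      + ∑ r ∈ Sᶜ.erase p,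
          ((if p ≤ r then (1:ℤ) else 0)
            - (if i (min v r) < j p ∧ j p ≤ i r then 1 else 0)) * (a (i r) : ℤ)
      - ((NI i S (i p) : ℤ)
          - (((insert p S).filter fun l => i v < j l ∧ j l ≤ i p).card : ℤ))
            * (a (i p) : ℤ)
      - (Lstar i j a (insert p S) (insert p S) - Lstar i j a S S) := by
    have hpt : ∀ r ∈ Sᶜ.erase p,
        ((NI i (insert p S) (i r) : ℤ)
          - (((insert r (insert p S)).filter
                fun l => mink i (insert p S) r < j l ∧ j l ≤ i r).card : ℤ))
            * (a (i r) : ℤ)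
        = ((NI i S (i r) : ℤ)
            - (((insert r S).filter fun l => mink i S r < j l ∧ j l ≤ i r).card : ℤ))
              * (a (i r) : ℤ)
          + ((if p ≤ r then (1:ℤ) else 0)
              - (if i (min v r) < j p ∧ j p ≤ i r then 1 else 0)) * (a (i r) : ℤ) := by
      intro r hr
      obtain ⟨hrp, hrc⟩ := Finset.mem_erase.1 hr
      have hrS : r ∉ S := Finset.mem_compl.1 hrc
      have hrS' : r ∉ insert p S := by
        simp only [Finset.mem_insert, not_or]
        exact ⟨hrp, hrS⟩
      have hpS'' : p ∉ insert r S := by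
        simp only [Finset.mem_insert, not_or]
        exact ⟨Ne.symm hrp, hp⟩
      have hNI : (NI i (insert p S) (i r) : ℤ)
          = (NI i S (i r) : ℤ) + (if p ≤ r then 1 else 0) := by
        unfold NI
        rw [card_filter_insert S p hp]
        congr 1
        by_cases hle : p ≤ r
        · rw [if_pos (hi.monotone hle), if_pos hle]
        · rw [if_neg (fun h2 => hle (hi.le_iff_le.1 h2)), if_neg hle]
      have hD : (((insert r (insert p S)).filter
            fun l => mink i (insert p S) r < j l ∧ j l ≤ i r).card : ℤ)
          = (((insert r S).filter fun l => mink i S r < j l ∧ j l ≤ i r).card : ℤ)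
            + (if i (min v r) < j p ∧ j p ≤ i r then 1 else 0) := by
        rw [hminkS' r hrS', hminkS r hrS, Finset.insert_comm,
            card_filter_insert (insert r S) p hpS'']
      rw [hNI, hD]
      ring
    unfold Cfun
    rw [Finset.sum_insert hp, hcomp, ← Finset.add_sum_erase Sᶜ _ hpc,
        Finset.sum_congr rfl hpt, Finset.sum_add_distrib,
        hminkS p hp, min_eq_left hvp.le]
    ring
  have hDp : (((insert p S).filter fun l => i v < j l ∧ j l ≤ i p).card : ℤ)
      = (NJp i j S (i p) : ℤ) + (if i v < j p ∧ j p ≤ i p then 1 else 0) := by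
    rw [card_filter_insert S p hp]
    unfold NJp
    rw [hm1]
  have hfinal := sum_eq_gfun hi hij a hUS hvS hS hp hpU hvp
  have hB := Bdiff hi hUS hS a
      (fun k => (if i p ≤ k then (1:ℤ) else 0) - (if i v < j p ∧ j p ≤ k then 1 else 0))
  rw [hCd, hLU, hLS', hLsw, hBS', hDp]
  simp only [le_refl, if_true] at *
  rw [← hfinal, ← hB]
  ring

end Step

/-- The factorization part of Lemma 4.3 ('lem-factor').  The sum ranges over
all `I_l` (index sets `S`) with `U ⊆ I_l ⊆ I` and `min I_l = i_v`. -/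
theorem lem_factor (i j : Fin m → Fin (n+1)) (hi : StrictMono i)
    (hj : Monotone j) (hij : ∀ k l, i k ≠ j l) (a : Fin (n+1) → ℕ)
    (U : Finset (Fin m)) (hU : U.Nonempty) (hUne : U ≠ Finset.univ)
    (v : Fin m) (hv : ∀ l ∈ U, v ≤ l) :
    (∑ S ∈ Finset.univ.filter
        (fun S : Finset (Fin m) => U ⊆ S ∧ v ∈ S ∧ ∀ l ∈ S, v ≤ l),
      (-1 : RatFunc ℚ) ^ (S.card + U.card) * qq ^ (Cfun i j a S + Lstar i j a S U))
    = (-1 : RatFunc ℚ) ^ (if imin i U = i v then 0 else 1) *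
        qq ^ (Cfun i j a (insert v U) + Lstar i j a (insert v U) U) *
        ∏ p ∈ Uᶜ.filter (fun p => v < p), (1 - qq ^ gfun i j a U v p) := by
  classical
  set base : Finset (Fin m) := insert v U with hbase
  set P : Finset (Fin m) := Uᶜ.filter (fun p => v < p) with hPdef
  set c : ℕ := if v ∈ U then 0 else 1 with hc
  have hvb : v ∈ base := Finset.mem_insert_self v U
  have hUb : U ⊆ base := Finset.subset_insert v U
  have hbv : ∀ l ∈ base, v ≤ l := by
    intro l hl
    rcases Finset.mem_insert.1 hl with h' | hl
    · exact h'.ge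
    · exact hv l hl
  have hbasecard : base.card = U.card + c := by
    by_cases hvU : v ∈ U
    · rw [hbase, Finset.insert_eq_self.2 hvU, hc, if_pos hvU]
      omega
    · rw [hbase, Finset.card_insert_of_notMem hvU, hc, if_neg hvU]
  have hiff : imin i U = i v ↔ v ∈ U := by
    constructor
    · intro h
      obtain ⟨u, hu, he⟩ := Finset.exists_mem_eq_inf U hU i
      unfold imin at h
      rw [he] at h
      exact hi.injective h ▸ hu
    · intro h
      exact imin_eq hi h hv
  have hite : (if imin i U = i v then 0 else 1) = c := if_congr hiff rfl rfl
  -- the chain identity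
  have hchain : ∀ T : Finset (Fin m), T ⊆ P →
      Cfun i j a (base ∪ T) + Lstar i j a (base ∪ T) U
        = Cfun i j a base + Lstar i j a base U + ∑ p ∈ T, gfun i j a U v p := by
    intro T
    induction T using Finset.induction_on with
    | empty => intro _; simp
    | @insert q T hq ih =>
      intro hsub
      have hqP : q ∈ P := hsub (Finset.mem_insert_self q T)
      have hTP : T ⊆ P := fun x hx => hsub (Finset.mem_insert_of_mem hx)
      obtain ⟨hqU, hvq⟩ : q ∉ U ∧ v < q := by
        have h2 := Finset.mem_filter.1 hqP
        exact ⟨Finset.mem_compl.1 h2.1, h2.2⟩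
      have hvbT : v ∈ base ∪ T := Finset.mem_union_left _ hvb
      have hle : ∀ l ∈ base ∪ T, v ≤ l := by
        intro l hl
        rcases Finset.mem_union.1 hl with hl | hl
        · exact hbv l hl
        · exact (Finset.mem_filter.1 (hTP hl)).2.le
      have hUbT : U ⊆ base ∪ T := fun x hx => Finset.mem_union_left _ (hUb hx)
      have hqnot : q ∉ base ∪ T := by
        intro hmem
        rcases Finset.mem_union.1 hmem with hl | hl
        · rcases Finset.mem_insert.1 hl with rfl | hl
          · exact absurd hvq (lt_irrefl _)
          · exact hqU hl
        · exact hq hl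
      rw [Finset.union_insert, step hi hij a hvbT hle hUbT hqnot hqU hvq, ih hTP,
          Finset.sum_insert hq]
      ring
  have key : ∀ T ∈ P.powerset,
      (-1 : RatFunc ℚ) ^ ((base ∪ T).card + U.card)
          * qq ^ (Cfun i j a (base ∪ T) + Lstar i j a (base ∪ T) U)
        = ((-1 : RatFunc ℚ) ^ c * (-1 : RatFunc ℚ) ^ T.card)
          * (qq ^ (Cfun i j a base + Lstar i j a base U)
              * ∏ p ∈ T, qq ^ gfun i j a U v p) := by
    intro T hT
    have hTP := Finset.mem_powerset.1 hT
    have hdisjT : Disjoint base T := by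
      rw [Finset.disjoint_left]
      intro x hx hx2
      have h2 := Finset.mem_filter.1 (hTP hx2)
      rcases Finset.mem_insert.1 hx with rfl | hx
      · exact absurd h2.2 (lt_irrefl _)
      · exact Finset.mem_compl.1 h2.1 hx
    rw [Finset.card_union_of_disjoint hdisjT, hchain T hTP, hbasecard,
        zpow_add₀ qq_ne_zero, qq_zpow_sum]
    have hexp : (U.card + c + T.card) + U.card = 2 * U.card + (c + T.card) := by ring
    rw [hexp, pow_add, pow_mul, neg_one_sq, one_pow, one_mul, pow_add]
  have hL : (∑ S ∈ Finset.univ.filter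
        (fun S : Finset (Fin m) => U ⊆ S ∧ v ∈ S ∧ ∀ l ∈ S, v ≤ l),
      (-1 : RatFunc ℚ) ^ (S.card + U.card)
        * qq ^ (Cfun i j a S + Lstar i j a S U))
      = ∑ T ∈ P.powerset,
        (-1 : RatFunc ℚ) ^ ((base ∪ T).card + U.card)
          * qq ^ (Cfun i j a (base ∪ T) + Lstar i j a (base ∪ T) U) := by
    refine Finset.sum_nbij' (i := fun S => S \ base) (j := fun T => base ∪ T)
        ?_ ?_ ?_ ?_ ?_
    · intro S hS
      obtain ⟨hUS, hvS, hSv⟩ := (Finset.mem_filter.1 hS).2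
      rw [Finset.mem_powerset]
      intro x hx
      obtain ⟨hxS, hxb⟩ := Finset.mem_sdiff.1 hx
      have hxU : x ∉ U := fun h => hxb (hUb h)
      have hxv : x ≠ v := fun h => hxb (h ▸ hvb)
      exact Finset.mem_filter.2 ⟨Finset.mem_compl.2 hxU,
        (hSv x hxS).lt_of_ne (Ne.symm hxv)⟩
    · intro T hT
      have hTP := Finset.mem_powerset.1 hT
      refine Finset.mem_filter.2 ⟨Finset.mem_univ _,
        fun x hx => Finset.mem_union_left _ (hUb hx),
        Finset.mem_union_left _ hvb, ?_⟩
      intro l hl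
      rcases Finset.mem_union.1 hl with hl | hl
      · exact hbv l hl
      · exact (Finset.mem_filter.1 (hTP hl)).2.le
    · intro S hS
      obtain ⟨hUS, hvS, _⟩ := (Finset.mem_filter.1 hS).2
      have hbS : base ⊆ S := Finset.insert_subset hvS hUS
      exact Finset.union_sdiff_of_subset hbS
    · intro T hT
      have hTP := Finset.mem_powerset.1 hT
      have hdisjT : Disjoint base T := by
        rw [Finset.disjoint_left]
        intro x hx hx2
        have h2 := Finset.mem_filter.1 (hTP hx2)
        rcases Finset.mem_insert.1 hx with rfl | hx
        · exact absurd h2.2 (lt_irrefl _)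
        · exact Finset.mem_compl.1 h2.1 hx
      exact Finset.union_sdiff_cancel_left hdisjT
    · intro S hS
      obtain ⟨hUS, hvS, _⟩ := (Finset.mem_filter.1 hS).2
      have hbS : base ⊆ S := Finset.insert_subset hvS hUS
      rw [Finset.union_sdiff_of_subset hbS]
  rw [hL, Finset.sum_congr rfl key, hite, prod_one_sub, Finset.mul_sum]
  refine Finset.sum_congr rfl fun T hT => ?_
  ring
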